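/- Let E be a topological graph and fix n ≥ 1. Then B^n is an open subset of E^n. -/

import Mathlib

/-- A topological graph: vertex space `V`, edge space `E`, continuous range map `r`
and locally homeomorphic source map `s`. -/
structure TopGraph (V E : Type) [TopologicalSpace V] [TopologicalSpace E] where
  r : E → V
  s : E → V
  r_cont : Continuous r
  s_locHomeo : IsLocalHomeomorph s

namespace TopGraph

variable {V E : Type} [TopologicalSpace V] [TopologicalSpace E] (G : TopGraph V E)

/-- The predicate that `μ : Fin n → E` is a (finite) path. -/
def IsPathFn {n : ℕ} (μ : Fin n → E) : Prop :=
  ∀ (i : ℕ) (h : i + 1 < n), G.s (μ ⟨i, Nat.lt_of_succ_lt h⟩) = G.r (μ ⟨i + 1, h⟩)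

/-- The space `E^n` of paths of length `n`, with the subspace topology of the product. -/
def Path (n : ℕ) : Type := {μ : Fin n → E // G.IsPathFn μ}

instance (n : ℕ) : TopologicalSpace (G.Path n) :=
  inferInstanceAs (TopologicalSpace {μ : Fin n → E // G.IsPathFn μ})

/-- `r^n(μ) = r(μ₁)`. -/
def pathRange {n : ℕ} (hn : 0 < n) (μ : G.Path n) : V := G.r (μ.1 ⟨0, hn⟩)

/-- `s^n(μ) = s(μₙ)`. -/
def pathSource {n : ℕ} (hn : 0 < n) (μ : G.Path n) : V :=
  G.s (μ.1 ⟨n - 1, Nat.sub_lt hn Nat.one_pos⟩)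

/-- A cycle is a path whose range equals its source; its base point is its range. -/
def IsCycle {n : ℕ} (hn : 0 < n) (μ : G.Path n) : Prop :=
  G.pathRange hn μ = G.pathSource hn μ

/-- A path `μ ∈ E^n` has an entrance if some edge `e ≠ μᵢ` has `r(e) = r(μᵢ)`. -/
def HasEntrance {n : ℕ} (μ : G.Path n) : Prop :=
  ∃ (i : Fin n) (e : E), G.r e = G.r (μ.1 i) ∧ e ≠ μ.1 i

theorem block_lt {n k : ℕ} (j : Fin k) (i : Fin n) : (j : ℕ) * n + (i : ℕ) < k * n := by
  have hi := i.2
  have hj := j.2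
  calc (j : ℕ) * n + (i : ℕ) < ((j : ℕ) + 1) * n := by rw [Nat.add_mul, Nat.one_mul]; omega
    _ ≤ k * n := Nat.mul_le_mul (Nat.succ_le_of_lt hj) le_rfl

/-- The `j`-th block of length `n` of a path of length `k * n`. -/
def block {n k : ℕ} (α : G.Path (k * n)) (j : Fin k) : G.Path n :=
  ⟨fun i => α.1 ⟨(j : ℕ) * n + (i : ℕ), block_lt j i⟩,
    fun i h => α.2 ((j : ℕ) * n + i) (block_lt j ⟨i + 1, h⟩)⟩

/-- `α ∈ kN` : every block of `α` lies in `N`. -/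
def BlocksIn {n k : ℕ} (N : Set (G.Path n)) (α : G.Path (k * n)) : Prop :=
  ∀ j : Fin k, G.block α j ∈ N

/-- The set `B^n` of cycles of length `n` admitting `k ≥ 1` and an open neighbourhood `N`
satisfying conditions (1) and (2) of Notation 3.3. -/
def B (n : ℕ) (hn : 0 < n) : Set (G.Path n) :=
  {μ | G.IsCycle hn μ ∧
    ∃ (k : ℕ) (hk : 0 < k) (N : Set (G.Path n)), IsOpen N ∧ μ ∈ N ∧
      (∀ α β : G.Path (k * n), G.BlocksIn N α → G.BlocksIn N β → α ≠ β →
        ¬ ∃ γ ∈ N, G.pathRange hn γ = G.pathSource (Nat.mul_pos hk hn) α ∧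
          G.pathSource hn γ = G.pathSource (Nat.mul_pos hk hn) β) ∧
      (∀ α : G.Path (k * n), G.BlocksIn N α →
        ¬ ∃ γ ∈ N, G.IsCycle hn γ ∧ G.HasEntrance γ ∧
          G.pathRange hn γ = G.pathSource (Nat.mul_pos hk hn) α)}

/-- The infinite path space `E^∞`, with the subspace topology of the product. -/
def InfPath : Type := {x : ℕ → E // ∀ i : ℕ, G.s (x i) = G.r (x (i + 1))}

instance : TopologicalSpace G.InfPath :=
  inferInstanceAs (TopologicalSpace {x : ℕ → E // ∀ i : ℕ, G.s (x i) = G.r (x (i + 1))})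

/-- The one-sided shift on `E^∞`. -/
def shift (x : G.InfPath) : G.InfPath := ⟨fun i => x.1 (i + 1), fun i => x.2 (i + 1)⟩

/-- The segment `x_{a+1} ⋯ x_{a+len}` (0-indexed: edges `a, …, a+len-1`) of an infinite path. -/
def segment (x : G.InfPath) (a len : ℕ) : G.Path len :=
  ⟨fun i => x.1 (a + (i : ℕ)), fun i _ => x.2 (a + i)⟩

/-- The boundary path groupoid `Γ(E^∞, σ)` as a set. -/
def Gamma : Type :=
  {g : G.InfPath × ℤ × G.InfPath //
    ∃ k l : ℕ, g.2.1 = (k : ℤ) - (l : ℤ) ∧ G.shift^[k] g.1 = G.shift^[l] g.2.2}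

/-- Basic sets `U(U, W, k, l)` for the topology of `Γ(E^∞, σ)`. -/
def basicSet (U W : Set G.InfPath) (k l : ℕ) : Set G.Gamma :=
  {g | g.1.1 ∈ U ∧ g.1.2.2 ∈ W ∧ g.1.2.1 = (k : ℤ) - (l : ℤ) ∧
    G.shift^[k] g.1.1 = G.shift^[l] g.1.2.2}

/-- The topology on `Γ(E^∞, σ)` generated by the sets `U(U, W, k, l)` with `U, W` open
and `σ^k`, `σ^l` injective on `U` resp. `W`. -/
instance : TopologicalSpace G.Gamma :=
  TopologicalSpace.generateFrom
    {S | ∃ (U W : Set G.InfPath) (k l : ℕ), IsOpen U ∧ IsOpen W ∧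
      Set.InjOn (G.shift^[k]) U ∧ Set.InjOn (G.shift^[l]) W ∧ S = G.basicSet U W k l}

/-- The isotropy group bundle `Iso(Γ(E^∞, σ))`. -/
def isoSet : Set G.Gamma := {g | g.1.1 = g.1.2.2}

/-- The interior of the isotropy group bundle. -/
def isoInterior : Set G.Gamma := interior G.isoSet

/-- The set `E^0_fin` of finite receivers. -/
def finRecv : Set V := {v | ∃ N : Set V, IsOpen N ∧ v ∈ N ∧ IsCompact (G.r ⁻¹' closure N)}

/-- The set `E^0_sce` of sources. -/
def sce : Set V := (closure (Set.range G.r))ᶜ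

/-- The set `E^0_rg` of regular vertices. -/
def rg : Set V := G.finRecv \ closure G.sce

/-- The set `E^0_sg` of singular vertices. -/
def sg : Set V := G.rgᶜ

/-- The set `V_n` of vertices having an open neighbourhood consisting of base points of
cycles without entrances in `E^n`. -/
def Vset (n : ℕ) (hn : 0 < n) : Set V :=
  {v | ∃ W : Set V, IsOpen W ∧ v ∈ W ∧
    ∀ w ∈ W, ∃ γ : G.Path n, G.IsCycle hn γ ∧ ¬ G.HasEntrance γ ∧ G.pathRange hn γ = w}

/-- `E` is topologically free if the set of base points of cycles without entrances has
empty interior. -/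
def TopologicallyFree : Prop :=
  interior {v : V | ∃ (n : ℕ) (hn : 0 < n) (γ : G.Path n),
    G.IsCycle hn γ ∧ ¬ G.HasEntrance γ ∧ G.pathRange hn γ = v} = ∅

/-- The groupoid `Γ(E^∞, σ)` is essentially free if the set of units with trivial
isotropy is dense. -/
def EssentiallyFree : Prop :=
  Dense {x : G.InfPath | ∀ g : G.Gamma, g.1.1 = x → g.1.2.2 = x → g.1.2.1 = 0}

end TopGraph


namespace TopGraph

variable {V E : Type} [TopologicalSpace V] [TopologicalSpace E]

/-- Auxiliary: iterated lift of a vertex backwards through local sections of `s`. -/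
noncomputable def vertF (G : TopGraph V E) (psi : ℕ → OpenPartialHomeomorph E V) : ℕ → V → V
  | 0 => fun w => w
  | (m + 1) => fun w => G.r ((psi m).symm (vertF G psi m w))

/-- Auxiliary: the edge produced at stage `m` of the lifting. -/
noncomputable def edgeF (G : TopGraph V E) (psi : ℕ → OpenPartialHomeomorph E V) (m : ℕ) (w : V) :
    E :=
  (psi m).symm (G.vertF psi m w)

/-- Index bookkeeping for lifting a cycle of length `n` cyclically. -/
def cycIdx (n : ℕ) (hn : 0 < n) (m : ℕ) : Fin n :=
  ⟨n - 1 - m % n, by have := Nat.sub_le (n - 1) (m % n); omega⟩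

theorem key_lemma (G : TopGraph V E) {n k : ℕ} (hn : 0 < n) (hk : 0 < k)
    (μ : G.Path n) (hcyc : G.IsCycle hn μ) (N : Set (G.Path n)) (hNopen : IsOpen N)
    (hμN : μ ∈ N) :
    ∃ V₀ : Set V, IsOpen V₀ ∧ G.pathRange hn μ ∈ V₀ ∧
      ∀ w ∈ V₀, ∃ α : G.Path (k * n), G.BlocksIn N α ∧
        G.pathSource (Nat.mul_pos hk hn) α = w := by
  classical
  choose φ hφsrc hφeq using fun i : Fin n => G.s_locHomeo (μ.1 i)
  set psi : ℕ → OpenPartialHomeomorph E V := fun m => φ (cycIdx n hn m) with hpsi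
  set w₀ := G.pathRange hn μ with hw₀def
  have hmodlt : ∀ m : ℕ, m % n < n := fun m => Nat.mod_lt m hn
  have hcyc' : G.r (μ.1 ⟨0, hn⟩) = G.s (μ.1 ⟨n - 1, Nat.sub_lt hn Nat.one_pos⟩) := hcyc
  have happ : ∀ {a b : ℕ} (ha : a < n) (hb : b < n), a = b → μ.1 ⟨a, ha⟩ = μ.1 ⟨b, hb⟩ := by
    intro a b ha hb h; subst h; rfl
  have hstep : ∀ m : ℕ, (m + 1) % n = if m % n + 1 = n then 0 else m % n + 1 := by
    intro m
    have hd := Nat.div_add_mod m n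
    have h2 : (m + 1) % n = (m % n + 1) % n := by
      conv_lhs => rw [← hd]
      rw [Nat.add_assoc, Nat.mul_add_mod]
    rw [h2]
    split
    · next h => rw [h, Nat.mod_self]
    · next h => exact Nat.mod_eq_of_lt (by have := hmodlt m; omega)
  have hA : ∀ m : ℕ, G.vertF psi m w₀ = G.s (μ.1 (cycIdx n hn m)) := by
    intro m
    induction m with
    | zero =>
      show w₀ = G.s (μ.1 (cycIdx n hn 0))
      rw [hw₀def]
      refine hcyc'.trans (congrArg G.s (happ _ _ ?_))
      have h0 : (0 : ℕ) % n = 0 := Nat.zero_mod n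
      show n - 1 = n - 1 - 0 % n
      omega
    | succ m ih =>
      have hedge : G.edgeF psi m w₀ = μ.1 (cycIdx n hn m) := by
        show (psi m).symm (G.vertF psi m w₀) = μ.1 (cycIdx n hn m)
        rw [ih, hφeq (cycIdx n hn m)]
        exact (φ (cycIdx n hn m)).left_inv (hφsrc (cycIdx n hn m))
      show G.r (G.edgeF psi m w₀) = G.s (μ.1 (cycIdx n hn (m + 1)))
      rw [hedge]
      by_cases hc : m % n + 1 = n
      · have h0 : (m + 1) % n = 0 := by rw [hstep m, if_pos hc]
        have e1 : μ.1 (cycIdx n hn m) = μ.1 ⟨0, hn⟩ :=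
          happ _ _ (by show n - 1 - m % n = 0; omega)
        have e2 : μ.1 (cycIdx n hn (m + 1)) = μ.1 ⟨n - 1, Nat.sub_lt hn Nat.one_pos⟩ :=
          happ _ _ (by show n - 1 - (m + 1) % n = n - 1; rw [h0]; omega)
        rw [e1, e2]; exact hcyc'
      · have h0 : (m + 1) % n = m % n + 1 := by rw [hstep m, if_neg hc]
        have hlt : m % n + 1 < n := by have := hmodlt m; omega
        have hp := μ.2 (n - 1 - (m % n + 1)) (by omega)
        have e1 : μ.1 (cycIdx n hn m) = μ.1 ⟨n - 1 - (m % n + 1) + 1, by omega⟩ :=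
          happ _ _ (by show n - 1 - m % n = _; omega)
        have e2 : μ.1 (cycIdx n hn (m + 1)) = μ.1 ⟨n - 1 - (m % n + 1), by omega⟩ :=
          happ _ _ (by show n - 1 - (m + 1) % n = _; rw [h0])
        rw [e1, e2]
        exact hp.symm
  have htgt : ∀ m : ℕ, G.vertF psi m w₀ ∈ (psi m).target := by
    intro m
    rw [hA m, hφeq (cycIdx n hn m)]
    exact (φ (cycIdx n hn m)).map_source (hφsrc (cycIdx n hn m))
  have hAe : ∀ m : ℕ, G.edgeF psi m w₀ = μ.1 (cycIdx n hn m) := by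
    intro m
    show (psi m).symm (G.vertF psi m w₀) = μ.1 (cycIdx n hn m)
    rw [hA m, hφeq (cycIdx n hn m)]
    exact (φ (cycIdx n hn m)).left_inv (hφsrc (cycIdx n hn m))
  have hB : ∀ m : ℕ, ContinuousAt (G.vertF psi m) w₀ := by
    intro m
    induction m with
    | zero => exact continuousAt_id
    | succ m ih =>
      show ContinuousAt (fun w => G.r ((psi m).symm (G.vertF psi m w))) w₀
      exact G.r_cont.continuousAt.comp (((psi m).continuousAt_symm (htgt m)).comp ih)
  have hBe : ∀ m : ℕ, ContinuousAt (G.edgeF psi m) w₀ := fun m =>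
    ((psi m).continuousAt_symm (htgt m)).comp (hB m)
  have hse : ∀ (m : ℕ) (w : V), G.vertF psi m w ∈ (psi m).target →
      G.s (G.edgeF psi m w) = G.vertF psi m w := by
    intro m w h
    show G.s ((psi m).symm (G.vertF psi m w)) = G.vertF psi m w
    rw [hφeq (cycIdx n hn m)]
    exact (φ (cycIdx n hn m)).right_inv h
  obtain ⟨O, hOopen, hON⟩ := isOpen_induced_iff.mp hNopen
  have hKpos : 0 < k * n := Nat.mul_pos hk hn
  have hkey : ∀ (j : Fin k) (i : Fin n),
      (k * n - 1 - ((j : ℕ) * n + (i : ℕ))) % n = n - 1 - (i : ℕ) := by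
    intro j i
    obtain ⟨q, hq⟩ : ∃ q, k = (j : ℕ) + 1 + q := ⟨k - (j : ℕ) - 1, by have := j.2; omega⟩
    have h1 : k * n = (j : ℕ) * n + (q * n + n) := by
      have hq' : k * n = ((j : ℕ) + 1 + q) * n := congrArg (fun t => t * n) hq
      rw [hq']; ring
    have h2 : k * n - 1 - ((j : ℕ) * n + (i : ℕ)) = (n - 1 - (i : ℕ)) + q * n := by
      rw [h1]
      have hi := i.2
      generalize (j : ℕ) * n = a
      generalize q * n = b
      omega
    rw [h2, Nat.add_mul_mod_self_right]
    exact Nat.mod_eq_of_lt (by have := i.2; omega)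
  have hblockval : ∀ j : Fin k,
      (fun i : Fin n => G.edgeF psi (k * n - 1 - ((j : ℕ) * n + (i : ℕ))) w₀) = μ.1 := by
    intro j
    funext i
    rw [hAe]
    exact happ _ _ (by rw [hkey j i]; have := i.2; omega)
  have hev : ∀ᶠ w in nhds w₀, (∀ m < k * n, G.vertF psi m w ∈ (psi m).target) ∧
      (∀ j : Fin k,
        (fun i : Fin n => G.edgeF psi (k * n - 1 - ((j : ℕ) * n + (i : ℕ))) w) ∈ O) := by
    refine Filter.Eventually.and ?_ ?_
    · have h1 : ∀ᶠ w in nhds w₀, ∀ m ∈ Finset.range (k * n),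
          G.vertF psi m w ∈ (psi m).target := by
        rw [Filter.eventually_all_finset]
        intro m _
        exact (hB m).eventually_mem ((psi m).open_target.mem_nhds (htgt m))
      exact h1.mono fun w h m hm => h m (Finset.mem_range.mpr hm)
    · rw [Filter.eventually_all]
      intro j
      have hca : ContinuousAt
          (fun w => fun i : Fin n => G.edgeF psi (k * n - 1 - ((j : ℕ) * n + (i : ℕ))) w) w₀ :=
        continuousAt_pi.mpr fun i => hBe _
      have hmem : (fun i : Fin n => G.edgeF psi (k * n - 1 - ((j : ℕ) * n + (i : ℕ))) w₀) ∈ O := by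
        rw [hblockval j]
        have : μ ∈ Subtype.val ⁻¹' O := hON ▸ hμN
        exact this
      exact hca.eventually_mem (hOopen.mem_nhds hmem)
  obtain ⟨V₀, hV₀p, hV₀o, hV₀w⟩ := eventually_nhds_iff.mp hev
  refine ⟨V₀, hV₀o, hV₀w, ?_⟩
  intro w hw
  obtain ⟨hw1, hw2⟩ := hV₀p w hw
  refine ⟨⟨fun p => G.edgeF psi (k * n - 1 - (p : ℕ)) w, ?_⟩, ?_, ?_⟩
  · intro p hp
    show G.s (G.edgeF psi (k * n - 1 - p) w) = G.r (G.edgeF psi (k * n - 1 - (p + 1)) w)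
    rw [hse _ w (hw1 _ (by omega))]
    have h2 : k * n - 1 - p = (k * n - 1 - (p + 1)) + 1 := by omega
    rw [h2]
    rfl
  · intro j
    show G.block ⟨fun p => G.edgeF psi (k * n - 1 - (p : ℕ)) w, _⟩ j ∈ N
    rw [← hON]
    exact hw2 j
  · show G.s (G.edgeF psi (k * n - 1 - (k * n - 1)) w) = w
    have h3 : k * n - 1 - (k * n - 1) = 0 := by omega
    rw [h3, hse 0 w (hw1 0 hKpos)]
    rfl

end TopGraph

/-- Theorem 3.8: `B^n` is an open subset of `E^n`. -/
theorem stmt3 {V E : Type} [TopologicalSpace V] [TopologicalSpace E]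
    [T2Space V] [T2Space E] [LocallyCompactSpace V] [LocallyCompactSpace E]
    [SecondCountableTopology V] [SecondCountableTopology E]
    (G : TopGraph V E)
    (n : ℕ) (hn : 0 < n) :
    IsOpen (G.B n hn) := by
  rw [isOpen_iff_mem_nhds]
  intro μ hμ
  obtain ⟨hcyc, k, hk, N, hNopen, hμN, h1, h2⟩ := hμ
  obtain ⟨V₀, hV₀o, hw₀, hsec⟩ := G.key_lemma hn hk μ hcyc N hNopen hμN
  have hrcont : Continuous (fun ν : G.Path n => G.r (ν.1 ⟨0, hn⟩)) :=
    G.r_cont.comp ((continuous_apply _).comp continuous_subtype_val)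
  have hscont : Continuous
      (fun ν : G.Path n => G.s (ν.1 ⟨n - 1, Nat.sub_lt hn Nat.one_pos⟩)) :=
    G.s_locHomeo.continuous.comp ((continuous_apply _).comp continuous_subtype_val)
  have hMopen : IsOpen ((N ∩ ((fun ν : G.Path n => G.r (ν.1 ⟨0, hn⟩)) ⁻¹' V₀)) ∩
      ((fun ν : G.Path n => G.s (ν.1 ⟨n - 1, Nat.sub_lt hn Nat.one_pos⟩)) ⁻¹' V₀)) :=
    (hNopen.inter (hV₀o.preimage hrcont)).inter (hV₀o.preimage hscont)
  have hμM : μ ∈ (N ∩ ((fun ν : G.Path n => G.r (ν.1 ⟨0, hn⟩)) ⁻¹' V₀)) ∩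
      ((fun ν : G.Path n => G.s (ν.1 ⟨n - 1, Nat.sub_lt hn Nat.one_pos⟩)) ⁻¹' V₀) :=
    ⟨⟨hμN, hw₀⟩, by
      show G.pathSource hn μ ∈ V₀
      rw [← hcyc]; exact hw₀⟩
  refine Filter.mem_of_superset (hMopen.mem_nhds hμM) ?_
  rintro ν ⟨⟨hνN, hνr⟩, hνs⟩
  have hcycν : G.IsCycle hn ν := by
    by_contra hne
    obtain ⟨α, hαb, hαs⟩ := hsec _ hνr
    obtain ⟨β, hβb, hβs⟩ := hsec _ hνs
    have hαβ : α ≠ β := by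
      rintro rfl
      exact hne (hαs.symm.trans hβs)
    exact h1 α β hαb hβb hαβ ⟨ν, hνN, hαs.symm, hβs.symm⟩
  exact ⟨hcycν, k, hk, N, hNopen, hνN, h1, h2⟩
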